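/- arXiv:1409.3212 — 3 statements merged into one kernel-verified Lean document; each statement's English description precedes it below -/
import Mathlib

section
/- For every integer m ≥ 2, the matrix U_m has an eigenvalue λ satisfying 0 < λ < 5^{−m/3}. -/
/-- `U m` is the `m × m` real symmetric matrix with `(U m) 0 0 = 1`,
diagonal entries `5` elsewhere, entries `2` on the sub- and super-diagonal,
and `0` otherwise. -/
def U (m : ℕ) : Matrix (Fin m) (Fin m) ℝ := fun i j =>
  if i = j then (if (i : ℕ) = 0 then 1 else 5)
  else if (i : ℕ) + 1 = (j : ℕ) ∨ (j : ℕ) + 1 = (i : ℕ) then 2 else 0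

open scoped Matrix

namespace UAux

/-- Upper bidiagonal Cholesky-type factor of `U m`. -/
def Mm (m : ℕ) : Matrix (Fin m) (Fin m) ℝ := fun i j =>
  if i = j then 1 else if (i : ℕ) + 1 = (j : ℕ) then 2 else 0

lemma sum_ite_nat {m : ℕ} (f : Fin m → ℝ) (n : ℕ) :
    (∑ k : Fin m, if (k : ℕ) = n then f k else 0) = if h : n < m then f ⟨n, h⟩ else 0 := by
  split_ifs with h
  · rw [Finset.sum_eq_single (⟨n, h⟩ : Fin m)]
    · simp
    · intro b _ hb
      rw [if_neg]
      simpa [Fin.ext_iff] using hb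
    · simp
  · apply Finset.sum_eq_zero
    intro k _
    rw [if_neg]
    have := k.isLt
    omega

lemma factor (m : ℕ) : U m = (Mm m)ᴴ * Mm m := by
  ext i j
  rw [Matrix.mul_apply]
  have hexp : ∀ a b : Fin m,
      Mm m a b = (if (a : ℕ) = (b : ℕ) then (1:ℝ) else 0)
        + (if (a : ℕ) + 1 = (b : ℕ) then 2 else 0) := by
    intro a b
    simp only [Mm, Fin.ext_iff]
    split_ifs <;> (first | (exfalso; omega) | norm_num)
  have hterm : ∀ k : Fin m, (Mm m)ᴴ i k * Mm m k j =
      ((if (k : ℕ) = (i : ℕ) then (if (i : ℕ) = (j : ℕ) then (1:ℝ) else 0) else 0)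
        + (if (k : ℕ) = (i : ℕ) then (if (i : ℕ) + 1 = (j : ℕ) then (2:ℝ) else 0) else 0))
      + ((if (k : ℕ) = (j : ℕ) then (if (j : ℕ) + 1 = (i : ℕ) then (2:ℝ) else 0) else 0)
        + (if (k : ℕ) = (i : ℕ) - 1 then
            (if 1 ≤ (i : ℕ) ∧ (i : ℕ) = (j : ℕ) then (4:ℝ) else 0) else 0)) := by
    intro k
    rw [Matrix.conjTranspose_apply, star_trivial, hexp k i, hexp k j]
    split_ifs <;> (first | (exfalso; omega) | norm_num)
  rw [Finset.sum_congr rfl fun k _ => hterm k]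
  rw [Finset.sum_add_distrib, Finset.sum_add_distrib, Finset.sum_add_distrib,
    sum_ite_nat, sum_ite_nat, sum_ite_nat, sum_ite_nat]
  have h1 : (i : ℕ) < m := i.isLt
  have h2 : (j : ℕ) < m := j.isLt
  have h3 : (i : ℕ) - 1 < m := by omega
  rw [dif_pos h1, dif_pos h2, dif_pos h3]
  simp only [U, Fin.ext_iff]
  split_ifs <;> (first | (exfalso; omega) | norm_num)


/-- The test vector with geometrically decaying entries. -/
noncomputable def vv (m : ℕ) : Fin m → ℝ := fun i => (-2⁻¹ : ℝ) ^ (i : ℕ)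

lemma Mm_mulVec (m : ℕ) :
    (Mm m) *ᵥ (vv m) = fun i : Fin m => if (i : ℕ) + 1 = m then vv m i else 0 := by
  funext i
  have hterm : ∀ j : Fin m, Mm m i j * vv m j =
      (if (j : ℕ) = (i : ℕ) then vv m j else 0)
        + (if (j : ℕ) = (i : ℕ) + 1 then 2 * vv m j else 0) := by
    intro j
    simp only [Mm, Fin.ext_iff]
    split_ifs <;> (first | (exfalso; omega) | ring)
  show (∑ j : Fin m, Mm m i j * vv m j) = _
  rw [Finset.sum_congr rfl fun j _ => hterm j, Finset.sum_add_distrib,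
    sum_ite_nat, sum_ite_nat, dif_pos i.isLt]
  by_cases hi : (i : ℕ) + 1 < m
  · rw [dif_pos hi, if_neg (by omega)]
    simp only [vv, pow_succ]
    ring
  · have hieq : (i : ℕ) + 1 = m := by have := i.isLt; omega
    rw [dif_neg hi, if_pos hieq]
    simp [vv]

lemma quad (m : ℕ) (hm : 1 ≤ m) :
    vv m ⬝ᵥ (U m *ᵥ vv m) = ((4 : ℝ)⁻¹) ^ (m - 1) := by
  have hstar : star (vv m) = vv m := by
    funext i; simp
  rw [factor m, ← Matrix.mulVec_mulVec, Matrix.dotProduct_mulVec,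
    Matrix.vecMul_conjTranspose, hstar, Mm_mulVec m]
  simp only [dotProduct, Pi.star_apply, star_trivial]
  have hterm : ∀ i : Fin m,
      (if (i : ℕ) + 1 = m then vv m i else 0) * (if (i : ℕ) + 1 = m then vv m i else 0)
        = if (i : ℕ) = m - 1 then vv m i * vv m i else 0 := by
    intro i
    have := i.isLt
    split_ifs <;> (first | (exfalso; omega) | ring)
  rw [Finset.sum_congr rfl fun i _ => hterm i, sum_ite_nat (fun k => vv m k * vv m k),
    dif_pos (show m - 1 < m by omega)]
  simp only [vv]
  rw [← mul_pow]
  norm_num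

lemma norm_v (m : ℕ) (hm : 2 ≤ m) : (5/4 : ℝ) ≤ vv m ⬝ᵥ vv m := by
  have h0 : (0 : ℕ) < m := by omega
  have h1 : (1 : ℕ) < m := by omega
  have hne : (⟨0, h0⟩ : Fin m) ≠ ⟨1, h1⟩ := by simp [Fin.ext_iff]
  show (5/4 : ℝ) ≤ ∑ i : Fin m, vv m i * vv m i
  calc (5/4 : ℝ) = vv m ⟨0, h0⟩ * vv m ⟨0, h0⟩ + vv m ⟨1, h1⟩ * vv m ⟨1, h1⟩ := by
        simp [vv]; norm_num
    _ = ∑ i ∈ ({⟨0, h0⟩, ⟨1, h1⟩} : Finset (Fin m)), vv m i * vv m i := by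
        rw [Finset.sum_pair hne]
    _ ≤ ∑ i : Fin m, vv m i * vv m i :=
        Finset.sum_le_sum_of_subset_of_nonneg (Finset.subset_univ _)
          (fun i _ _ => mul_self_nonneg _)

lemma det_Mm (m : ℕ) : (Mm m).det = 1 := by
  rw [Matrix.det_of_upperTriangular]
  · simp [Mm]
  · intro i j hij
    have hv : (j : ℕ) < (i : ℕ) := hij
    simp only [Mm]
    rw [if_neg (fun h => by subst h; exact lt_irrefl _ hv), if_neg (by omega)]

lemma det_U (m : ℕ) : (U m).det = 1 := by
  rw [factor m, Matrix.det_mul, Matrix.det_conjTranspose, det_Mm]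
  simp

lemma ineq (m : ℕ) (hm : 2 ≤ m) :
    ((4 : ℝ)⁻¹) ^ (m - 1) * (4 / 5) < (5 : ℝ) ^ (-(m : ℝ) / 3) := by
  obtain ⟨k, rfl⟩ : ∃ k, m = k + 2 := ⟨m - 2, by omega⟩
  set c : ℝ := (5 : ℝ) ^ (-((k + 2 : ℕ) : ℝ) / 3) with hc
  have hcpos : 0 < c := Real.rpow_pos_of_pos (by norm_num) _
  have hc3 : c ^ (3 : ℕ) = ((5 : ℝ) ^ (k + 2))⁻¹ := by
    rw [hc, ← Real.rpow_natCast ((5:ℝ) ^ (-((k + 2 : ℕ) : ℝ) / 3)) 3,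
      ← Real.rpow_mul (by norm_num : (0:ℝ) ≤ 5)]
    rw [show (-((k + 2 : ℕ) : ℝ) / 3) * ((3 : ℕ) : ℝ) = -((k + 2 : ℕ) : ℝ) by push_cast; ring]
    rw [Real.rpow_neg (by norm_num), Real.rpow_natCast]
  have e0 : k + 2 - 1 = k + 1 := rfl
  set a : ℝ := ((4 : ℝ)⁻¹) ^ (k + 1) * (4 / 5) with hadef
  have hanneg : 0 ≤ a := by positivity
  have ha3 : a ^ (3 : ℕ) = ((64 : ℝ) ^ (k + 1))⁻¹ * (64 / 125) := by
    have e2 : ((4 : ℝ) ^ (k + 1)) ^ (3 : ℕ) = (64 : ℝ) ^ (k + 1) := by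
      rw [← pow_mul, mul_comm (k+1) 3, pow_mul]; norm_num
    rw [hadef, inv_pow, mul_pow, inv_pow, e2]
    norm_num
  rw [e0]
  show a < c
  have h3 : a ^ (3 : ℕ) < c ^ (3 : ℕ) := by
    rw [ha3, hc3]
    have hp64 : (0 : ℝ) < (64 : ℝ) ^ (k + 1) := by positivity
    have hp5 : (0 : ℝ) < (5 : ℝ) ^ (k + 2) := by positivity
    rw [inv_mul_eq_div, inv_eq_one_div, div_lt_div_iff₀ hp64 hp5]
    have hle : (5 : ℝ) ^ k ≤ (64 : ℝ) ^ k := pow_le_pow_left₀ (by norm_num) (by norm_num) k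
    have hp : (0 : ℝ) < (64 : ℝ) ^ k := by positivity
    rw [pow_succ, pow_succ, pow_succ]
    nlinarith [hle, hp]
  exact lt_of_pow_lt_pow_left₀ 3 hcpos.le h3

end UAux


theorem exists_eigenvalue_lt_rpow (m : ℕ) (hm : 2 ≤ m) :
    ∃ (lam : ℝ) (v : Fin m → ℝ), v ≠ 0 ∧ (U m).mulVec v = lam • v ∧
      0 < lam ∧ lam < (5 : ℝ) ^ (-(m : ℝ) / 3) := by
  classical
  set c : ℝ := (5 : ℝ) ^ (-(m : ℝ) / 3) with hcdef
  have hcpos : 0 < c := Real.rpow_pos_of_pos (by norm_num) _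
  have hfac := UAux.factor m
  have hPSD : (U m).PosSemidef := by
    rw [hfac]; exact Matrix.posSemidef_conjTranspose_mul_self _
  have hherm : (U m).IsHermitian := hPSD.1
  have hUnit : IsUnit (U m).det := by rw [UAux.det_U]; exact isUnit_one
  have hUinj : Function.Injective ((U m).mulVec) :=
    Matrix.mulVec_injective_iff_isUnit.mpr ((Matrix.isUnit_iff_isUnit_det _).mpr hUnit)
  -- the Rayleigh quotient of `UAux.vv m` is smaller than `c`
  have hkey : UAux.vv m ⬝ᵥ (U m *ᵥ UAux.vv m) < c * (UAux.vv m ⬝ᵥ UAux.vv m) := by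
    rw [UAux.quad m (by omega)]
    have h1 : ((4 : ℝ)⁻¹) ^ (m - 1) < c * (5 / 4) := by
      have h2 := UAux.ineq m hm
      calc ((4 : ℝ)⁻¹) ^ (m - 1) = (((4 : ℝ)⁻¹) ^ (m - 1) * (4 / 5)) * (5 / 4) := by ring
        _ < c * (5 / 4) := by
            apply mul_lt_mul_of_pos_right h2 (by norm_num)
    calc ((4 : ℝ)⁻¹) ^ (m - 1) < c * (5 / 4) := h1
      _ ≤ c * (UAux.vv m ⬝ᵥ UAux.vv m) := mul_le_mul_of_nonneg_left (UAux.norm_v m hm) hcpos.le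
  set B : Matrix (Fin m) (Fin m) ℝ := U m - c • (1 : Matrix (Fin m) (Fin m) ℝ) with hBdef
  have hBH : B.IsHermitian := by
    apply hherm.sub
    show (c • (1 : Matrix (Fin m) (Fin m) ℝ))ᴴ = _
    rw [Matrix.conjTranspose_smul, Matrix.conjTranspose_one, star_trivial]
  have hBv : UAux.vv m ⬝ᵥ (B *ᵥ UAux.vv m) < 0 := by
    rw [hBdef, Matrix.sub_mulVec, Matrix.smul_mulVec, Matrix.one_mulVec,
      dotProduct_sub, dotProduct_smul, smul_eq_mul]
    linarith
  have hnotPSD : ¬ B.PosSemidef := by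
    intro h
    have h2 := h.dotProduct_mulVec_nonneg (UAux.vv m)
    have hstar : star (UAux.vv m) = UAux.vv m := by funext i; simp
    rw [hstar] at h2
    linarith
  have hex : ∃ i, hBH.eigenvalues i < 0 := by
    by_contra hcon
    push_neg at hcon
    exact hnotPSD (hBH.posSemidef_iff_eigenvalues_nonneg.mpr hcon)
  obtain ⟨i, hi⟩ := hex
  set w : Fin m → ℝ := ⇑(hBH.eigenvectorBasis i) with hwdef
  have hw0 : w ≠ 0 := fun h => hBH.eigenvectorBasis.orthonormal.ne_zero i (by simpa [hwdef] using h)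
  have hBw : B *ᵥ w = hBH.eigenvalues i • w := hBH.mulVec_eigenvectorBasis i
  set lam : ℝ := hBH.eigenvalues i + c with hlamdef
  have hUw : (U m) *ᵥ w = lam • w := by
    have h1 : (U m) *ᵥ w - c • w = hBH.eigenvalues i • w := by
      rw [← hBw, hBdef, Matrix.sub_mulVec, Matrix.smul_mulVec, Matrix.one_mulVec]
    have h2 : (U m) *ᵥ w = hBH.eigenvalues i • w + c • w := by
      rw [← h1]; abel
    rw [h2, hlamdef, add_smul]
  have hww : 0 < w ⬝ᵥ w := by
    have h1 : w ⬝ᵥ w ≠ 0 := fun h => hw0 (dotProduct_self_eq_zero.mp h)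
    have h2 : 0 ≤ w ⬝ᵥ w := Finset.sum_nonneg fun j _ => mul_self_nonneg _
    exact lt_of_le_of_ne h2 (Ne.symm h1)
  have hlam_nonneg : 0 ≤ lam := by
    have h1 := hPSD.dotProduct_mulVec_nonneg w
    have hstar : star w = w := by funext j; simp
    rw [hstar, hUw, dotProduct_smul, smul_eq_mul] at h1
    nlinarith
  have hlam_ne : lam ≠ 0 := by
    intro h
    rw [h, zero_smul] at hUw
    apply hw0
    apply hUinj
    rw [hUw, Matrix.mulVec_zero]
  exact ⟨lam, w, hw0, hUw, lt_of_le_of_ne hlam_nonneg (Ne.symm hlam_ne), by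
    rw [hlamdef]; linarith⟩
end

section
/- For every integer m ≥ 1, the matrix U_m is positive definite; that is, every eigenvalue of U_m is strictly positive (equivalently, xᵀ U_m x > 0 for every nonzero x ∈ ℝ^m). -/
open scoped Matrix

/-- Upper bidiagonal factor: `1` on the diagonal, `2` on the superdiagonal. -/
def Uaux (m : ℕ) : Matrix (Fin m) (Fin m) ℝ := fun i j =>
  if i = j then 1 else if (i : ℕ) + 1 = (j : ℕ) then 2 else 0

lemma Uaux_factor (m : ℕ) : (Uaux m)ᴴ * Uaux m = U m := by
  ext j k
  rw [Matrix.mul_apply]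
  simp only [Matrix.conjTranspose_apply, star_trivial, Uaux]
  have hsplit : ∀ i : Fin m,
      (if i = j then (1:ℝ) else if (i:ℕ)+1 = (j:ℕ) then 2 else 0) *
        (if i = k then (1:ℝ) else if (i:ℕ)+1 = (k:ℕ) then 2 else 0) =
      (if i = j then (1:ℝ) else 0) * (if i = k then (1:ℝ) else 0)
      + (if i = j then (1:ℝ) else 0) * (if (i:ℕ)+1 = (k:ℕ) then (2:ℝ) else 0)
      + (if (i:ℕ)+1 = (j:ℕ) then (2:ℝ) else 0) * (if i = k then (1:ℝ) else 0)
      + (if (i:ℕ)+1 = (j:ℕ) then (2:ℝ) else 0) *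
          (if (i:ℕ)+1 = (k:ℕ) then (2:ℝ) else 0) := by
    intro i
    simp only [Fin.ext_iff]
    split_ifs <;> ((try ring) <;> exfalso <;> omega)
  rw [Finset.sum_congr rfl fun i _ => hsplit i]
  rw [Finset.sum_add_distrib, Finset.sum_add_distrib, Finset.sum_add_distrib]
  have key : ∀ (a : Fin m) (f : Fin m → ℝ),
      ∑ i : Fin m, (if i = a then f i else 0) = f a := by
    intro a f
    rw [Finset.sum_ite_eq' Finset.univ a f]
    simp
  have e1 : ∀ i : Fin m, (if i = j then (1:ℝ) else 0) * (if i = k then (1:ℝ) else 0)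
      = if i = j then (if i = k then (1:ℝ) else 0) else 0 := fun i => by
    rw [ite_mul, zero_mul, one_mul]
  have S1 : ∑ i : Fin m, (if i = j then (1:ℝ) else 0) * (if i = k then (1:ℝ) else 0)
      = if j = k then 1 else 0 := by
    rw [Finset.sum_congr rfl fun i _ => e1 i, key j]
  have e2 : ∀ i : Fin m, (if i = j then (1:ℝ) else 0) *
      (if (i:ℕ)+1 = (k:ℕ) then (2:ℝ) else 0)
      = if i = j then (if (i:ℕ)+1 = (k:ℕ) then (2:ℝ) else 0) else 0 := fun i => by
    rw [ite_mul, zero_mul, one_mul]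
  have S2 : ∑ i : Fin m, (if i = j then (1:ℝ) else 0) *
      (if (i:ℕ)+1 = (k:ℕ) then (2:ℝ) else 0)
      = if (j:ℕ)+1 = (k:ℕ) then 2 else 0 := by
    rw [Finset.sum_congr rfl fun i _ => e2 i, key j]
  have e3 : ∀ i : Fin m, (if (i:ℕ)+1 = (j:ℕ) then (2:ℝ) else 0) *
      (if i = k then (1:ℝ) else 0)
      = if i = k then (if (i:ℕ)+1 = (j:ℕ) then (2:ℝ) else 0) else 0 := fun i => by
    rw [mul_ite, mul_zero, mul_one]
  have S3 : ∑ i : Fin m, (if (i:ℕ)+1 = (j:ℕ) then (2:ℝ) else 0) *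
      (if i = k then (1:ℝ) else 0)
      = if (k:ℕ)+1 = (j:ℕ) then 2 else 0 := by
    rw [Finset.sum_congr rfl fun i _ => e3 i, key k]
  have S4 : ∑ i : Fin m, (if (i:ℕ)+1 = (j:ℕ) then (2:ℝ) else 0) *
      (if (i:ℕ)+1 = (k:ℕ) then (2:ℝ) else 0)
      = if (j:ℕ) = (k:ℕ) ∧ (j:ℕ) ≠ 0 then 4 else 0 := by
    by_cases hj : (j:ℕ) = 0
    · simp [hj]
    · have hlt : (j:ℕ) - 1 < m := by omega
      set j' : Fin m := ⟨(j:ℕ) - 1, hlt⟩ with hj'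
      have hval : (j':ℕ) = (j:ℕ) - 1 := rfl
      have hcond : ∀ i : Fin m, ((i:ℕ)+1 = (j:ℕ)) ↔ i = j' := by
        intro i; rw [Fin.ext_iff, hval]; omega
      simp only [hcond]
      have e4 : ∀ i : Fin m, (if i = j' then (2:ℝ) else 0) *
          (if (i:ℕ)+1 = (k:ℕ) then (2:ℝ) else 0)
          = if i = j' then (2:ℝ) * (if (i:ℕ)+1 = (k:ℕ) then (2:ℝ) else 0) else 0 :=
        fun i => by rw [ite_mul, zero_mul]
      rw [Finset.sum_congr rfl fun i _ => e4 i, key j', hval]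
      split_ifs <;> first | omega | norm_num
  rw [S1, S2, S3, S4]
  simp only [U, Fin.ext_iff]
  split_ifs <;> first | omega | norm_num

theorem U_posDef (m : ℕ) (hm : 1 ≤ m) : (U m).PosDef := by
  have hfact := Uaux_factor m
  have hdet : (Uaux m).det = 1 := by
    rw [Matrix.det_of_upperTriangular]
    · simp [Uaux]
    · intro i j hij
      simp only [Uaux]
      rw [if_neg, if_neg]
      · simp only [id] at hij; omega
      · simp only [id] at hij; exact fun h => by simp [Fin.ext_iff] at h; omega
  have hunit : IsUnit (Uaux m) := (Matrix.isUnit_iff_isUnit_det _).2 (by simp [hdet])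
  have hinj : Function.Injective (Uaux m).mulVec :=
    Matrix.mulVec_injective_iff_isUnit.2 hunit
  have hps : (U m).PosSemidef := hfact ▸ Matrix.posSemidef_conjTranspose_mul_self _
  refine ⟨hps.1, fun x hx => ?_⟩
  rcases lt_or_eq_of_le (hps.2 x) with h | h
  · exact h
  · exfalso
    apply hx
    have h0 : (U m) *ᵥ x = 0 := (hps.dotProduct_mulVec_zero_iff x).1
      (by simpa [dotProduct, Matrix.mulVec, Finsupp.sum_fintype, Finset.mul_sum, mul_assoc] using h.symm)
    have hunit' : IsUnit (Uaux m)ᴴ := by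
      rw [Matrix.isUnit_iff_isUnit_det, Matrix.det_conjTranspose, hdet]
      simp
    have hinj' : Function.Injective ((Uaux m)ᴴ).mulVec :=
      Matrix.mulVec_injective_iff_isUnit.2 hunit'
    have h1 : (Uaux m) *ᵥ x = 0 := by
      apply hinj'
      rw [Matrix.mulVec_mulVec, hfact, h0, Matrix.mulVec_zero]
    have h2 : (⇑x : Fin m → ℝ) = 0 := hinj (by rw [h1, Matrix.mulVec_zero])
    exact Finsupp.ext fun i => by simpa using congrFun h2 i
end

section
/- For every integer m ≥ 2, at least m − 1 of the eigenvalues of U_m, counted with multiplicity, are greater than or equal to 1, and at least ⌈m/2⌉ − 1 of the eigenvalues of U_m, counted with multiplicity, are greater than or equal to 5. -/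
open Finset

namespace UEig

open Matrix

/-! ### Auxiliary matrices -/

def Bmat (m : ℕ) : Matrix (Fin m) (Fin m) ℝ := fun i j =>
  if i = j then 5
  else if (i : ℕ) + 1 = (j : ℕ) ∨ (j : ℕ) + 1 = (i : ℕ) then 2 else 0

def Shift (m : ℕ) : Matrix (Fin m) (Fin m) ℝ := fun i j =>
  if (i : ℕ) + 1 = (j : ℕ) then 1 else 0

def Emat (m : ℕ) : Matrix (Fin m) (Fin m) ℝ := fun i j =>
  if (i : ℕ) = 0 ∧ (j : ℕ) = 0 then 1 else 0

lemma Bmat_herm (m : ℕ) : (Bmat m).IsHermitian := by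
  ext i j
  simp only [conjTranspose_apply, Bmat, star_trivial]
  by_cases h : i = j
  · subst h; simp
  · rw [if_neg h, if_neg (Ne.symm h)]
    exact if_congr or_comm rfl rfl

lemma Bmat_decomp (m : ℕ) :
    Bmat m = (5:ℝ) • (1 : Matrix (Fin m) (Fin m) ℝ) + (2:ℝ) • Shift m + (2:ℝ) • (Shift m)ᵀ := by
  ext i j
  simp only [Bmat, Shift, Matrix.add_apply, Matrix.smul_apply, Matrix.one_apply,
    Matrix.transpose_apply, smul_eq_mul, Fin.ext_iff]
  split_ifs <;> first | (exfalso; omega) | norm_num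

lemma U_decomp (m : ℕ) : U m = Bmat m - (4:ℝ) • Emat m := by
  ext i j
  simp only [U, Bmat, Emat, Matrix.sub_apply, Matrix.smul_apply, smul_eq_mul, Fin.ext_iff]
  split_ifs <;> first | (exfalso; omega) | norm_num

lemma D_conj (m : ℕ) :
    (diagonal fun i : Fin m => (-1:ℝ)^(i:ℕ)) * Bmat m * (diagonal fun i : Fin m => (-1:ℝ)^(i:ℕ))
      = (10:ℝ) • (1 : Matrix (Fin m) (Fin m) ℝ) - Bmat m := by
  have hsq : ∀ k : ℕ, ((-1:ℝ)^k) * ((-1:ℝ)^k) = 1 := fun k => by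
    rw [← pow_add]; exact Even.neg_one_pow ⟨k, rfl⟩
  have hadj : ∀ k : ℕ, ((-1:ℝ)^k) * ((-1:ℝ)^(k+1)) = -1 := fun k => by
    rw [← pow_add]; exact Odd.neg_one_pow ⟨k, by ring⟩
  ext i j
  rw [Matrix.mul_diagonal, Matrix.diagonal_mul]
  simp only [Bmat, Matrix.sub_apply, Matrix.smul_apply, Matrix.one_apply, smul_eq_mul]
  by_cases h : i = j
  · subst h
    rw [if_pos (rfl : i = i), if_pos (rfl : i = i)]
    linear_combination 5 * hsq (i:ℕ)
  · rw [if_neg h, if_neg h]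
    by_cases h2 : (i:ℕ)+1 = (j:ℕ) ∨ (j:ℕ)+1 = (i:ℕ)
    · rw [if_pos h2]
      rcases h2 with h2 | h2
      · rw [← h2]; linear_combination 2 * hadj (i:ℕ)
      · rw [← h2]; linear_combination 2 * hadj (j:ℕ)
    · rw [if_neg h2]; ring

lemma D_sq (m : ℕ) :
    (diagonal fun i : Fin m => (-1:ℝ)^(i:ℕ)) * (diagonal fun i : Fin m => (-1:ℝ)^(i:ℕ)) = 1 := by
  rw [diagonal_mul_diagonal]
  convert diagonal_one
  rw [← pow_add]
  exact Even.neg_one_pow ⟨_, rfl⟩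

/-! ### Quadratic form computations -/

lemma qB_lower (m : ℕ) (x : Fin m → ℝ) : x ⬝ᵥ x ≤ x ⬝ᵥ (Bmat m *ᵥ x) := by
  set y : ℕ → ℝ := fun n => if h : n < m then x ⟨n, h⟩ else 0 with hy
  have hyx : ∀ i : Fin m, y (i:ℕ) = x i := fun i => by rw [hy]; simp [i.isLt]
  have hym : ∀ n, m ≤ n → y n = 0 := fun n hn => by rw [hy]; simp [Nat.not_lt.mpr hn]
  have hShift : ∀ i : Fin m, (Shift m *ᵥ x) i = y ((i:ℕ)+1) := by
    intro i
    by_cases h : (i:ℕ)+1 < m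
    · have hv : y ((i:ℕ)+1) = x ⟨(i:ℕ)+1, h⟩ := by rw [hy]; simp [h]
      rw [hv, Matrix.mulVec, dotProduct, Finset.sum_eq_single (⟨(i:ℕ)+1, h⟩ : Fin m)]
      · simp [Shift]
      · intro j _ hj
        have hj' : (i:ℕ)+1 ≠ (j:ℕ) := fun hh => hj (Fin.ext hh.symm)
        simp [Shift, hj']
      · simp
    · have h0 : y ((i:ℕ)+1) = 0 := hym _ (by omega)
      rw [h0, Matrix.mulVec, dotProduct]
      apply Finset.sum_eq_zero
      intro j _
      have hj' : (i:ℕ)+1 ≠ (j:ℕ) := by have := j.isLt; omega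
      simp [Shift, hj']
  have hS : x ⬝ᵥ x = ∑ n ∈ range m, y n ^ 2 := by
    rw [dotProduct, ← Fin.sum_univ_eq_sum_range (fun n => y n ^2) m]
    exact Finset.sum_congr rfl fun i _ => by rw [hyx]; ring
  have hP : x ⬝ᵥ (Shift m *ᵥ x) = ∑ n ∈ range m, y n * y (n+1) := by
    rw [dotProduct, ← Fin.sum_univ_eq_sum_range (fun n => y n * y (n+1)) m]
    exact Finset.sum_congr rfl fun i _ => by rw [hShift, hyx]
  have hshiftsum : ∑ n ∈ range m, y (n+1)^2 = (∑ n ∈ range m, y n^2) - y 0^2 := by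
    have h1 := Finset.sum_range_succ' (fun n => y n ^2) m
    have h2 := Finset.sum_range_succ (fun n => y n ^2) m
    have h3 : y m = 0 := hym m le_rfl
    rw [h1] at h2
    simp only [h3] at h2
    have h4 : (0:ℝ)^2 = 0 := by norm_num
    rw [h4] at h2
    linarith [h2]
  have hT : ∑ n ∈ range m, (y n + y (n+1))^2
      = (∑ n ∈ range m, y n^2) + (∑ n ∈ range m, y (n+1)^2)
        + 2 * (∑ n ∈ range m, y n * y (n+1)) := by
    rw [Finset.mul_sum, ← Finset.sum_add_distrib, ← Finset.sum_add_distrib]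
    exact Finset.sum_congr rfl fun n _ => by ring
  have hTnn : (0:ℝ) ≤ ∑ n ∈ range m, (y n + y (n+1))^2 :=
    Finset.sum_nonneg fun n _ => sq_nonneg _
  have hBx : x ⬝ᵥ (Bmat m *ᵥ x) = 5 * (x ⬝ᵥ x) + 4 * (x ⬝ᵥ (Shift m *ᵥ x)) := by
    have htr : x ⬝ᵥ ((Shift m)ᵀ *ᵥ x) = x ⬝ᵥ (Shift m *ᵥ x) := by
      rw [Matrix.mulVec_transpose, dotProduct_comm, ← Matrix.dotProduct_mulVec]
    rw [Bmat_decomp, Matrix.add_mulVec, Matrix.add_mulVec, Matrix.smul_mulVec,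
      Matrix.smul_mulVec, Matrix.smul_mulVec, Matrix.one_mulVec,
      dotProduct_add, dotProduct_add, dotProduct_smul,
      dotProduct_smul, dotProduct_smul, htr]
    simp only [smul_eq_mul]
    ring
  rw [hBx, hS, hP]
  nlinarith [hTnn, hT, hshiftsum, sq_nonneg (y 0)]

lemma qE_eq (m : ℕ) (hm : 0 < m) (x : Fin m → ℝ) :
    x ⬝ᵥ (Emat m *ᵥ x) = (x ⟨0, hm⟩)^2 := by
  have hE : ∀ i : Fin m, (Emat m *ᵥ x) i = if (i:ℕ) = 0 then x ⟨0, hm⟩ else 0 := by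
    intro i
    rw [Matrix.mulVec, dotProduct]
    by_cases h : (i:ℕ) = 0
    · rw [if_pos h, Finset.sum_eq_single (⟨0, hm⟩ : Fin m)]
      · simp [Emat, h]
      · intro j _ hj
        have hj' : (j:ℕ) ≠ 0 := fun hh => hj (Fin.ext hh)
        simp [Emat, hj']
      · simp
    · rw [if_neg h]
      exact Finset.sum_eq_zero fun j _ => by simp [Emat, h]
  rw [dotProduct, Finset.sum_eq_single (⟨0, hm⟩ : Fin m)]
  · rw [hE]; simp; ring
  · intro j _ hj
    have hj' : (j:ℕ) ≠ 0 := fun hh => hj (Fin.ext hh)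
    rw [hE, if_neg hj', mul_zero]
  · simp

/-! ### Eigenvector span subspaces -/

lemma self_dot_pos {m : ℕ} {x : Fin m → ℝ} (hx : x ≠ 0) : 0 < x ⬝ᵥ x := by
  obtain ⟨j, hj⟩ := Function.ne_iff.mp hx
  have h1 : (0:ℝ) < x j * x j := mul_self_pos.mpr (by simpa using hj)
  rw [dotProduct]
  exact lt_of_lt_of_le h1
    (Finset.single_le_sum (fun i _ => mul_self_nonneg (x i)) (Finset.mem_univ j))

lemma sum_smul_dot {ι : Type*} (t : Finset ι) {m : ℕ} (a : ι → ℝ) (u : ι → (Fin m → ℝ))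
    (w : Fin m → ℝ) : (∑ i ∈ t, a i • u i) ⬝ᵥ w = ∑ i ∈ t, a i * (u i ⬝ᵥ w) := by
  simp only [dotProduct, Finset.sum_apply, Pi.smul_apply, smul_eq_mul, Finset.sum_mul,
    Finset.mul_sum]
  rw [Finset.sum_comm]
  exact Finset.sum_congr rfl fun i _ => Finset.sum_congr rfl fun k _ => by ring

lemma dot_sum_smul {ι : Type*} (t : Finset ι) {m : ℕ} (a : ι → ℝ) (u : ι → (Fin m → ℝ))
    (w : Fin m → ℝ) : w ⬝ᵥ (∑ i ∈ t, a i • u i) = ∑ i ∈ t, a i * (w ⬝ᵥ u i) := by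
  simp only [dotProduct, Finset.sum_apply, Pi.smul_apply, smul_eq_mul, Finset.mul_sum]
  rw [Finset.sum_comm]
  exact Finset.sum_congr rfl fun i _ => Finset.sum_congr rfl fun k _ => by ring

lemma eig_dot {m : ℕ} {A : Matrix (Fin m) (Fin m) ℝ} (hA : A.IsHermitian) (i j : Fin m) :
    ⇑(hA.eigenvectorBasis i) ⬝ᵥ ⇑(hA.eigenvectorBasis j) = if i = j then 1 else 0 := by
  have h := hA.eigenvectorBasis.orthonormal
  rw [orthonormal_iff_ite] at h
  have h2 := h i j
  rw [EuclideanSpace.inner_eq_star_dotProduct] at h2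
  rw [dotProduct_comm]
  simpa using h2

lemma exists_eig_subspace {m : ℕ} {A : Matrix (Fin m) (Fin m) ℝ} (hA : A.IsHermitian)
    (s : Finset (Fin m)) :
    ∃ S : Submodule ℝ (Fin m → ℝ), Module.finrank ℝ S = s.card ∧
      ∀ x ∈ S, ∃ c : Fin m → ℝ,
        x ⬝ᵥ x = ∑ i ∈ s, (c i)^2 ∧
        x ⬝ᵥ (A *ᵥ x) = ∑ i ∈ s, hA.eigenvalues i * (c i)^2 := by
  set v : Fin m → (Fin m → ℝ) := fun i => ⇑(hA.eigenvectorBasis i) with hv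
  have hdot : ∀ i j, v i ⬝ᵥ v j = if i = j then 1 else 0 := eig_dot hA
  set φ : ({ i // i ∈ s } → ℝ) →ₗ[ℝ] (Fin m → ℝ) :=
    ∑ i : { i // i ∈ s }, LinearMap.smulRight (LinearMap.proj i) (v i) with hφ
  have hφapp : ∀ c, φ c = ∑ i : { i // i ∈ s }, c i • v (i : Fin m) := by
    intro c; simp [hφ]
  have key : ∀ a b, φ a ⬝ᵥ φ b = ∑ i : {i // i ∈ s}, a i * b i := by
    intro a b
    rw [hφapp, hφapp, sum_smul_dot]
    refine Finset.sum_congr rfl fun i _ => ?_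
    rw [dot_sum_smul]
    rw [Finset.sum_eq_single i]
    · rw [hdot]; simp
    · intro j _ hj
      have hji : (i : Fin m) ≠ (j : Fin m) := fun h => hj (Subtype.ext h.symm)
      rw [hdot, if_neg hji, mul_zero]
    · simp
  have hinj : Function.Injective φ := by
    rw [injective_iff_map_eq_zero]
    intro a ha
    have h0 : (0:ℝ) = ∑ i : {i // i ∈ s}, a i * a i := by
      rw [← key a a, ha]; simp
    funext i
    have hnn : ∀ j ∈ (Finset.univ : Finset {i // i ∈ s}), 0 ≤ a j * a j :=
      fun j _ => mul_self_nonneg _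
    have h1 := (Finset.sum_eq_zero_iff_of_nonneg hnn).mp h0.symm i (Finset.mem_univ i)
    have h2 := mul_self_eq_zero.mp h1
    simpa using h2
  refine ⟨LinearMap.range φ, ?_, ?_⟩
  · have hker : LinearMap.ker φ = ⊥ := LinearMap.ker_eq_bot.mpr hinj
    have h2 := LinearMap.finrank_range_add_finrank_ker φ
    rw [hker, finrank_bot, add_zero] at h2
    rw [h2, Module.finrank_pi, Fintype.card_coe]
  · rintro x ⟨a, rfl⟩
    refine ⟨fun i => if h : i ∈ s then a ⟨i, h⟩ else 0, ?_, ?_⟩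
    · rw [key a a, ← Finset.sum_coe_sort s]
      refine Finset.sum_congr rfl fun i _ => ?_
      simp only [i.2, dif_pos]
      ring
    · have hvv : ∀ (i : Fin m), A *ᵥ (v i) = hA.eigenvalues i • v i := by
        intro i; rw [hv]; exact hA.mulVec_eigenvectorBasis i
      have hAv : A *ᵥ φ a = φ (fun i => hA.eigenvalues i * a i) := by
        rw [hφapp, hφapp, ← Matrix.mulVecLin_apply, map_sum]
        refine Finset.sum_congr rfl fun i _ => ?_
        rw [(A.mulVecLin).map_smul, Matrix.mulVecLin_apply, hvv, smul_smul, mul_comm]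
      rw [hAv, key, ← Finset.sum_coe_sort s]
      refine Finset.sum_congr rfl fun i _ => ?_
      simp only [i.2, dif_pos]
      ring

lemma exists_low_subspace {m : ℕ} {A : Matrix (Fin m) (Fin m) ℝ} (hA : A.IsHermitian) (t : ℝ) :
    ∃ S : Submodule ℝ (Fin m → ℝ),
      Module.finrank ℝ S = (univ.filter fun i => hA.eigenvalues i < t).card ∧
      ∀ x ∈ S, x ≠ 0 → x ⬝ᵥ (A *ᵥ x) < t * (x ⬝ᵥ x) := by
  obtain ⟨S, hdim, hmem⟩ := exists_eig_subspace hA (univ.filter fun i => hA.eigenvalues i < t)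
  refine ⟨S, hdim, fun x hx hx0 => ?_⟩
  obtain ⟨c, hxx, hq⟩ := hmem x hx
  have hpos : 0 < x ⬝ᵥ x := self_dot_pos hx0
  rw [hq, hxx]
  rw [hxx] at hpos
  rw [Finset.mul_sum]
  obtain ⟨i0, hi0, hci0⟩ : ∃ i ∈ (univ.filter fun i => hA.eigenvalues i < t), 0 < (c i)^2 := by
    by_contra hcon
    push_neg at hcon
    have hz : ∑ i ∈ (univ.filter fun i => hA.eigenvalues i < t), (c i)^2 ≤ 0 :=
      Finset.sum_nonpos fun i hi => hcon i hi
    linarith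
  refine Finset.sum_lt_sum (fun i hi => ?_) ⟨i0, hi0, ?_⟩
  · exact mul_le_mul_of_nonneg_right (Finset.mem_filter.mp hi).2.le (sq_nonneg _)
  · exact mul_lt_mul_of_pos_right (Finset.mem_filter.mp hi0).2 hci0

lemma exists_high_subspace {m : ℕ} {A : Matrix (Fin m) (Fin m) ℝ} (hA : A.IsHermitian) (t : ℝ) :
    ∃ S : Submodule ℝ (Fin m → ℝ),
      Module.finrank ℝ S = (univ.filter fun i => t ≤ hA.eigenvalues i).card ∧
      ∀ x ∈ S, t * (x ⬝ᵥ x) ≤ x ⬝ᵥ (A *ᵥ x) := by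
  obtain ⟨S, hdim, hmem⟩ := exists_eig_subspace hA (univ.filter fun i => t ≤ hA.eigenvalues i)
  refine ⟨S, hdim, fun x hx => ?_⟩
  obtain ⟨c, hxx, hq⟩ := hmem x hx
  rw [hq, hxx, Finset.mul_sum]
  exact Finset.sum_le_sum fun i hi =>
    mul_le_mul_of_nonneg_right (Finset.mem_filter.mp hi).2 (sq_nonneg _)

/-! ### Dimension counting -/



lemma inter_exists {m : ℕ} (S T : Submodule ℝ (Fin m → ℝ))
    (h : m < Module.finrank ℝ S + Module.finrank ℝ T) :
    ∃ x, x ∈ S ∧ x ∈ T ∧ x ≠ 0 := by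
  have htop : Module.finrank ℝ (Fin m → ℝ) = m := by
    rw [Module.finrank_pi]; simp
  have hsum := Submodule.finrank_sup_add_finrank_inf_eq S T
  have hle : Module.finrank ℝ ↥(S ⊔ T) ≤ m := by
    have h2 := Submodule.finrank_le (S ⊔ T)
    rw [htop] at h2
    exact h2
  have hpos : 0 < Module.finrank ℝ ↥(S ⊓ T) := by omega
  have hne : S ⊓ T ≠ ⊥ := by
    intro hbot
    rw [hbot, finrank_bot] at hpos
    exact lt_irrefl _ hpos
  obtain ⟨x, hx, hx0⟩ := Submodule.exists_mem_ne_zero_of_ne_bot hne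
  exact ⟨x, (Submodule.mem_inf.mp hx).1, (Submodule.mem_inf.mp hx).2, hx0⟩

lemma hyperplane_inter {m : ℕ} (W : Submodule ℝ (Fin m → ℝ)) (f : (Fin m → ℝ) →ₗ[ℝ] ℝ) :
    Module.finrank ℝ W ≤ Module.finrank ℝ ↥(W ⊓ LinearMap.ker f) + 1 := by
  set g := f.comp W.subtype with hg
  have h1 := LinearMap.finrank_range_add_finrank_ker g
  have h2 : Module.finrank ℝ ↥(LinearMap.range g) ≤ 1 := by
    have h := Submodule.finrank_le (LinearMap.range g)
    simpa using h
  have h3 : LinearMap.ker g = Submodule.comap W.subtype (LinearMap.ker f) :=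
    LinearMap.ker_comp _ _
  have h4 : Submodule.map W.subtype (LinearMap.ker g) = W ⊓ LinearMap.ker f := by
    rw [h3, Submodule.map_comap_subtype]
  have h5 : Module.finrank ℝ ↥(LinearMap.ker g)
      = Module.finrank ℝ ↥(W ⊓ LinearMap.ker f) := by
    rw [← h4]
    exact (Submodule.equivMapOfInjective W.subtype (Submodule.injective_subtype W) _).finrank_eq
  omega

end UEig

open UEig Matrix

/-- At least `m - 1` of the eigenvalues of `U m` (counted with multiplicity)
are `≥ 1`, and at least `⌈m/2⌉ - 1` of them are `≥ 5`. -/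
theorem U_eigenvalue_counts (m : ℕ) (hm : 2 ≤ m) (hU : (U m).IsHermitian) :
    m - 1 ≤ (univ.filter fun i : Fin m => 1 ≤ hU.eigenvalues i).card ∧
      (m + 1) / 2 - 1 ≤ (univ.filter fun i : Fin m => 5 ≤ hU.eigenvalues i).card := by
  have hm0 : 0 < m := by omega
  have hB : (Bmat m).IsHermitian := Bmat_herm m
  set f : (Fin m → ℝ) →ₗ[ℝ] ℝ := LinearMap.proj (⟨0, hm0⟩ : Fin m) with hf
  have hqU : ∀ x : Fin m → ℝ,
      x ⬝ᵥ (U m *ᵥ x) = x ⬝ᵥ (Bmat m *ᵥ x) - 4 * (x ⟨0, hm0⟩)^2 := by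
    intro x
    rw [U_decomp, Matrix.sub_mulVec, dotProduct_sub, Matrix.smul_mulVec,
      dotProduct_smul, qE_eq m hm0, smul_eq_mul]
  -- kernel of the coordinate functional has rank ≥ m - 1
  have hKdim : m ≤ Module.finrank ℝ ↥(LinearMap.ker f) + 1 := by
    have h1 := hyperplane_inter (⊤ : Submodule ℝ (Fin m → ℝ)) f
    rw [top_inf_eq] at h1
    have h2 : Module.finrank ℝ (⊤ : Submodule ℝ (Fin m → ℝ)) = m := by
      rw [finrank_top, Module.finrank_pi]; simp
    omega
  have hker0 : ∀ x ∈ LinearMap.ker f, x ⟨0, hm0⟩ = 0 := fun x hx => hx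
  -- Claim 1
  have claim1 : (univ.filter fun i : Fin m => hU.eigenvalues i < 1).card ≤ 1 := by
    by_contra hc
    push_neg at hc
    obtain ⟨S, hdimS, hSq⟩ := exists_low_subspace hU 1
    obtain ⟨x, hxS, hxK, hx0⟩ := inter_exists S (LinearMap.ker f) (by omega)
    have hlt := hSq x hxS hx0
    have hge : x ⬝ᵥ x ≤ x ⬝ᵥ (U m *ᵥ x) := by
      rw [hqU, hker0 x hxK]
      have := qB_lower m x
      simp only [ne_eq, OfNat.ofNat_ne_zero, not_false_eq_true, zero_pow, mul_zero, sub_zero]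
      linarith
    rw [one_mul] at hlt
    linarith
  -- Claim 2
  have claim2 : (univ.filter fun i : Fin m => hB.eigenvalues i < 5).card
      + (univ.filter fun i : Fin m => hB.eigenvalues i < 5).card ≤ m := by
    by_contra hc
    push_neg at hc
    obtain ⟨S, hdimS, hSq⟩ := exists_low_subspace hB 5
    set Dm : Matrix (Fin m) (Fin m) ℝ := diagonal fun i : Fin m => (-1:ℝ)^(i:ℕ) with hDm
    set T := Submodule.map (Dm.mulVecLin) S with hT
    have hTS : Submodule.map (Dm.mulVecLin) T = S := by
      rw [hT, ← Submodule.map_comp, ← Matrix.mulVecLin_mul, D_sq, Matrix.mulVecLin_one,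
        Submodule.map_id]
    have hdimT : Module.finrank ℝ S ≤ Module.finrank ℝ T := by
      have h1 := Submodule.finrank_map_le (Dm.mulVecLin) T
      rw [hTS] at h1
      exact h1
    have hswap : ∀ (u w : Fin m → ℝ), (Dm *ᵥ u) ⬝ᵥ w = u ⬝ᵥ (Dm *ᵥ w) := by
      intro u w
      simp only [hDm, dotProduct, Matrix.mulVec_diagonal]
      exact Finset.sum_congr rfl fun i _ => by ring
    have hq10 : ∀ w : Fin m → ℝ,
        (Dm *ᵥ w) ⬝ᵥ (Bmat m *ᵥ (Dm *ᵥ w)) = 10 * (w ⬝ᵥ w) - w ⬝ᵥ (Bmat m *ᵥ w) := by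
      intro w
      rw [hswap, Matrix.mulVec_mulVec, Matrix.mulVec_mulVec, D_conj,
        Matrix.sub_mulVec, dotProduct_sub, Matrix.smul_mulVec, Matrix.one_mulVec,
        dotProduct_smul, smul_eq_mul]
    have hnorm : ∀ w : Fin m → ℝ, (Dm *ᵥ w) ⬝ᵥ (Dm *ᵥ w) = w ⬝ᵥ w := by
      intro w
      rw [hswap, Matrix.mulVec_mulVec, D_sq, Matrix.one_mulVec]
    obtain ⟨x, hxS, hxT, hx0⟩ := inter_exists S T (by omega)
    obtain ⟨w, hwS, hwx⟩ := hxT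
    rw [Matrix.mulVecLin_apply] at hwx
    have hw0 : w ≠ 0 := by
      rintro rfl
      rw [Matrix.mulVec_zero] at hwx
      exact hx0 hwx.symm
    have h1 := hSq x hxS hx0
    have h2 := hSq w hwS hw0
    rw [← hwx, hq10 w, hnorm w] at h1
    linarith
  -- Claim 3
  have claim3 : (univ.filter fun i : Fin m => hU.eigenvalues i < 5).card
      ≤ (univ.filter fun i : Fin m => hB.eigenvalues i < 5).card + 1 := by
    by_contra hc
    push_neg at hc
    obtain ⟨S, hdimS, hSq⟩ := exists_low_subspace hU 5
    obtain ⟨W, hdimW, hWq⟩ := exists_high_subspace hB 5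
    have hWcard : Module.finrank ℝ W
        = m - (univ.filter fun i : Fin m => hB.eigenvalues i < 5).card := by
      rw [hdimW]
      have h1 := Finset.card_filter_add_card_filter_not
        (s := (univ : Finset (Fin m))) (p := fun i => hB.eigenvalues i < 5)
      have h2 : (univ.filter fun i : Fin m => ¬ hB.eigenvalues i < 5)
          = univ.filter fun i : Fin m => 5 ≤ hB.eigenvalues i := by
        apply Finset.filter_congr
        intro i _
        simp [not_lt]
      rw [h2, Finset.card_univ, Fintype.card_fin] at h1
      omega
    have hWK := hyperplane_inter W f
    have hBcard : (univ.filter fun i : Fin m => hB.eigenvalues i < 5).card ≤ m := by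
      have := Finset.card_filter_le (univ : Finset (Fin m))
        (fun i => hB.eigenvalues i < 5)
      simpa using this
    obtain ⟨x, hxS, hxWK, hx0⟩ := inter_exists S (W ⊓ LinearMap.ker f) (by omega)
    have hxW : x ∈ W := (Submodule.mem_inf.mp hxWK).1
    have hxK : x ∈ LinearMap.ker f := (Submodule.mem_inf.mp hxWK).2
    have h1 := hSq x hxS hx0
    have h2 := hWq x hxW
    have h3 : x ⬝ᵥ (U m *ᵥ x) = x ⬝ᵥ (Bmat m *ᵥ x) := by
      rw [hqU, hker0 x hxK]
      simp
    linarith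
  -- Final assembly
  have hcompl1 : (univ.filter fun i : Fin m => 1 ≤ hU.eigenvalues i).card
      + (univ.filter fun i : Fin m => hU.eigenvalues i < 1).card = m := by
    have h1 := Finset.card_filter_add_card_filter_not
      (s := (univ : Finset (Fin m))) (p := fun i => 1 ≤ hU.eigenvalues i)
    have h2 : (univ.filter fun i : Fin m => ¬ 1 ≤ hU.eigenvalues i)
        = univ.filter fun i : Fin m => hU.eigenvalues i < 1 := by
      apply Finset.filter_congr
      intro i _
      simp [not_le]
    rw [h2, Finset.card_univ, Fintype.card_fin] at h1
    exact h1
  have hcompl5 : (univ.filter fun i : Fin m => 5 ≤ hU.eigenvalues i).card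
      + (univ.filter fun i : Fin m => hU.eigenvalues i < 5).card = m := by
    have h1 := Finset.card_filter_add_card_filter_not
      (s := (univ : Finset (Fin m))) (p := fun i => 5 ≤ hU.eigenvalues i)
    have h2 : (univ.filter fun i : Fin m => ¬ 5 ≤ hU.eigenvalues i)
        = univ.filter fun i : Fin m => hU.eigenvalues i < 5 := by
      apply Finset.filter_congr
      intro i _
      simp [not_le]
    rw [h2, Finset.card_univ, Fintype.card_fin] at h1
    exact h1
  omega
end
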